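/- Let f : ℝ^n → ℝ ∪ {+∞} and g : ℝ^m → ℝ ∪ {+∞} be proper, lower semicontinuous, and convex, let H ∈ C¹(ℝ^n × ℝ^m) with L-Lipschitz gradient, let γ₁, γ₂ > 0 and λ ∈ [0,1]. Define Γ : ℝ^n × ℝ^m → ℝ^n × ℝ^m by Γ(x,y) = (u,v) where u = prox_{f/(γ₁L)}(x − (1/(γ₁L))∇ₓH(x,y)) − x and v = prox_{g/(γ₂L)}(y − (1/(γ₂L))∇_yH((1−λ)(u+x)+λx, y)) − y. Then Γ is Lipschitz continuous with constant β(λ,γ₁,γ₂) = (6 + 4/γ₁² + (4 + 24(1−λ)²)/γ₂² + 16(1−λ)²/(γ₁²γ₂²))^{1/2}. -/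

import Mathlib

set_option maxHeartbeats 1000000

open Set

open scoped RealInnerProductSpace

lemma prox_nonexpansive {E : Type*} [NormedAddCommGroup E] [InnerProductSpace ℝ E]
    (f : E → EReal) (hproper : ∃ u, f u ≠ ⊤) (hnbot : ∀ u, f u ≠ ⊥)
    (hconv : ∀ a b : E, ∀ t : ℝ, 0 ≤ t → t ≤ 1 →
      f (t • a + (1 - t) • b) ≤ (t : EReal) * f a + ((1 - t : ℝ) : EReal) * f b)
    (c : ℝ) (hc : 0 < c) (P : E → E)
    (hP : ∀ w u, f (P w) + ((c / 2 * ‖P w - w‖ ^ 2 : ℝ) : EReal)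
      ≤ f u + ((c / 2 * ‖u - w‖ ^ 2 : ℝ) : EReal)) :
    ∀ w w', ‖P w - P w'‖ ≤ ‖w - w'‖ := by
  obtain ⟨u₀, hu₀⟩ := hproper
  have hreal : ∀ w, f (P w) = (((f (P w)).toReal : ℝ) : EReal) := by
    intro w
    have hlt : f u₀ + ((c / 2 * ‖u₀ - w‖ ^ 2 : ℝ) : EReal) < ⊤ :=
      EReal.add_lt_top hu₀ (EReal.coe_ne_top _)
    have hle := hP w u₀
    have hne : f (P w) ≠ ⊤ := by
      intro htop
      rw [htop, EReal.top_add_coe] at hle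
      exact absurd (top_le_iff.mp hle) (ne_of_lt hlt)
    exact (EReal.coe_toReal hne (hnbot _)).symm
  have key : ∀ w w', 0 ≤ ((f (P w')).toReal - (f (P w)).toReal)
      + c * ⟪P w - w, P w' - P w⟫ := by
    intro w w'
    set p := P w with hp
    set q := P w' with hq
    set Fp := (f p).toReal with hFp
    set Fq := (f q).toReal with hFq
    have hpF : f p = (Fp : EReal) := hreal w
    have hqF : f q = (Fq : EReal) := hreal w'
    have step : ∀ t : ℝ, 0 < t → t ≤ 1 →
        0 ≤ (Fq - Fp) + c * ⟪p - w, q - p⟫ + c * t / 2 * ‖q - p‖ ^ 2 := by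
      intro t ht0 ht1
      have hut : (t • q + (1 - t) • p) - w = (p - w) + t • (q - p) := by module
      have hnorm : ‖(t • q + (1 - t) • p) - w‖ ^ 2
          = ‖p - w‖ ^ 2 + 2 * (t * ⟪p - w, q - p⟫) + t ^ 2 * ‖q - p‖ ^ 2 := by
        rw [hut, norm_add_sq_real, real_inner_smul_right, norm_smul,
          Real.norm_eq_abs, abs_of_nonneg ht0.le]
        ring
      have hconv' := hconv q p t ht0.le ht1
      have hrhs : ((t : EReal) * f q + ((1 - t : ℝ) : EReal) * f p)
          = (((t * Fq + (1 - t) * Fp) : ℝ) : EReal) := by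
        rw [hpF, hqF]; push_cast; ring
      have hchain : ((Fp + c / 2 * ‖p - w‖ ^ 2 : ℝ) : EReal)
          ≤ (((t * Fq + (1 - t) * Fp + c / 2 * ‖(t • q + (1 - t) • p) - w‖ ^ 2) : ℝ) : EReal) := by
        calc ((Fp + c / 2 * ‖p - w‖ ^ 2 : ℝ) : EReal)
            = f p + ((c / 2 * ‖p - w‖ ^ 2 : ℝ) : EReal) := by rw [hpF, ← EReal.coe_add]
          _ ≤ f (t • q + (1 - t) • p)
              + ((c / 2 * ‖(t • q + (1 - t) • p) - w‖ ^ 2 : ℝ) : EReal) := hP w _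
          _ ≤ (((t * Fq + (1 - t) * Fp) : ℝ) : EReal)
              + ((c / 2 * ‖(t • q + (1 - t) • p) - w‖ ^ 2 : ℝ) : EReal) := by
              exact add_le_add (hrhs ▸ hconv') le_rfl
          _ = _ := by rw [← EReal.coe_add]
      have hRR := EReal.coe_le_coe_iff.mp hchain
      rw [hnorm] at hRR
      have hmul : t * 0 ≤ t * ((Fq - Fp) + c * ⟪p - w, q - p⟫ + c * t / 2 * ‖q - p‖ ^ 2) := by
        nlinarith [hRR]
      exact le_of_mul_le_mul_left hmul ht0
    set C := (Fq - Fp) + c * ⟪p - w, q - p⟫ with hC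
    set D := c / 2 * ‖q - p‖ ^ 2 with hD
    have hD0 : 0 ≤ D := by positivity
    by_contra hneg
    push_neg at hneg
    set t := min 1 ((-C) / (2 * (D + 1))) with ht
    have htpos : 0 < t := lt_min one_pos (div_pos (by linarith) (by positivity))
    have ht1 : t ≤ 1 := min_le_left _ _
    have ht2 : t * (2 * (D + 1)) ≤ -C := by
      have := min_le_right 1 ((-C) / (2 * (D + 1)))
      calc t * (2 * (D + 1)) ≤ ((-C) / (2 * (D + 1))) * (2 * (D + 1)) := by
            apply mul_le_mul_of_nonneg_right this (by positivity)
        _ = -C := by field_simp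
    have hstep := step t htpos ht1
    have : 0 ≤ C + t * D := by
      have := hstep
      rw [hC, hD] at *
      nlinarith [this]
    nlinarith [mul_nonneg htpos.le hD0, htpos]
  intro w w'
  have k1 := key w w'
  have k2 := key w' w
  have e1 : ⟪P w - P w', P w - P w'⟫ = ‖P w - P w'‖ ^ 2 := real_inner_self_eq_norm_sq _
  have hip : ⟪P w - w, P w' - P w⟫ + ⟪P w' - w', P w - P w'⟫
      = ⟪w - w', P w - P w'⟫ - ‖P w - P w'‖ ^ 2 := by
    simp only [inner_sub_left, inner_sub_right] at e1 ⊢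
    rw [real_inner_comm (P w') (P w)] at *
    linarith [e1]
  have hsq : ‖P w - P w'‖ ^ 2 ≤ ⟪w - w', P w - P w'⟫ := by nlinarith [k1, k2, hip, hc]
  have cauchy := real_inner_le_norm (w - w') (P w - P w')
  nlinarith [hsq, cauchy, norm_nonneg (w - w'), norm_nonneg (P w - P w')]


lemma scalar_bound (a b g1 g2 zn du dv s t1 t2 : ℝ)
    (ha : 0 ≤ a) (hb : 0 ≤ b) (hg1 : 0 ≤ g1) (hg2 : 0 ≤ g2) (hzn : 0 ≤ zn)
    (hdu0 : 0 ≤ du) (hdv0 : 0 ≤ dv) (hs0 : 0 ≤ s) (hs1 : s ≤ 1)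
    (ht1 : 0 < t1) (ht2 : 0 < t2)
    (h1 : g1 ^ 2 ≤ a ^ 2 + b ^ 2) (hz : zn ≤ a + s * t1 * g1)
    (h2 : g2 ^ 2 ≤ zn ^ 2 + b ^ 2)
    (hdu : du ≤ 2 * a + t1 * g1) (hdv : dv ≤ 2 * b + t2 * g2) :
    du ^ 2 + dv ^ 2
      ≤ (6 + 4 * t1 ^ 2 + (4 + 24 * s ^ 2) * t2 ^ 2 + 16 * s ^ 2 * t1 ^ 2 * t2 ^ 2)
        * (a ^ 2 + b ^ 2) := by
  have hdu2 : du ^ 2 ≤ (2 * a + t1 * g1) ^ 2 := by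
    apply pow_le_pow_left₀ hdu0 hdu
  have hdv2 : dv ^ 2 ≤ (2 * b + t2 * g2) ^ 2 := by
    apply pow_le_pow_left₀ hdv0 hdv
  have hA : (2 * a + t1 * g1) ^ 2 ≤ 6 * a ^ 2 + 3 * (t1 * g1) ^ 2 := by
    nlinarith [sq_nonneg (a - t1 * g1)]
  have hB : (2 * b + t2 * g2) ^ 2 ≤ 6 * b ^ 2 + 3 * (t2 * g2) ^ 2 := by
    nlinarith [sq_nonneg (b - t2 * g2)]
  have hC : zn ^ 2 ≤ (a + s * t1 * g1) ^ 2 := pow_le_pow_left₀ hzn hz 2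
  have hD : g2 ^ 2 ≤ (a + s * t1 * g1) ^ 2 + b ^ 2 := by linarith
  have hag : a * g1 ≤ a ^ 2 + b ^ 2 := by nlinarith [sq_nonneg (a - g1)]
  have ham : 6 * s * t1 ≤ 13 * s ^ 2 * t1 ^ 2 + 9 / 13 := by
    nlinarith [sq_nonneg (13 * s * t1 - 3)]
  have hC2 : (6 * s * t1) * (a * g1) ≤ (13 * s ^ 2 * t1 ^ 2 + 9 / 13) * (a ^ 2 + b ^ 2) :=
    mul_le_mul ham hag (mul_nonneg ha hg1) (by positivity)
  have th1 : t2 ^ 2 * g2 ^ 2 ≤ t2 ^ 2 * ((a + s * t1 * g1) ^ 2 + b ^ 2) :=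
    mul_le_mul_of_nonneg_left hD (sq_nonneg t2)
  have th2 : t2 ^ 2 * ((6 * s * t1) * (a * g1))
      ≤ t2 ^ 2 * ((13 * s ^ 2 * t1 ^ 2 + 9 / 13) * (a ^ 2 + b ^ 2)) :=
    mul_le_mul_of_nonneg_left hC2 (sq_nonneg t2)
  have th3 : s ^ 2 * t1 ^ 2 * t2 ^ 2 * g1 ^ 2 ≤ s ^ 2 * t1 ^ 2 * t2 ^ 2 * (a ^ 2 + b ^ 2) :=
    mul_le_mul_of_nonneg_left h1 (by positivity)
  have th4 : t1 ^ 2 * g1 ^ 2 ≤ t1 ^ 2 * (a ^ 2 + b ^ 2) :=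
    mul_le_mul_of_nonneg_left h1 (sq_nonneg t1)
  have key4 : 3 * (t2 * g2) ^ 2 + 3 * (t1 * g1) ^ 2
      ≤ (4 * t1 ^ 2 + (4 + 24 * s ^ 2) * t2 ^ 2 + 16 * s ^ 2 * t1 ^ 2 * t2 ^ 2)
        * (a ^ 2 + b ^ 2) := by
    have s1 : 0 ≤ t1 ^ 2 * (a ^ 2 + b ^ 2) := by positivity
    have s2 : 0 ≤ t2 ^ 2 * (a ^ 2 + b ^ 2) := by positivity
    have s3 : 0 ≤ s ^ 2 * t2 ^ 2 * (a ^ 2 + b ^ 2) := by positivity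
    linarith [th1, th2, th3, th4, s1, s2, s3]
  linarith [hdu2, hdv2, hA, hB, key4]


/-- For `f, g` proper lsc convex, `H ∈ C¹` with `L`-Lipschitz gradient, `γ₁, γ₂ > 0`,
`λ ∈ [0,1]`, the operator `Γ(x,y) = (u,v)` with
`u = prox_{f/(γ₁L)}(x − (γ₁L)⁻¹∇ₓH(x,y)) − x` and
`v = prox_{g/(γ₂L)}(y − (γ₂L)⁻¹∇_yH((1−λ)(u+x)+λx, y)) − y`
is Lipschitz with constant `β(λ,γ₁,γ₂) = (6 + 4/γ₁² + (4+24(1−λ)²)/γ₂² + 16(1−λ)²/(γ₁²γ₂²))^{1/2}`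
(stated in squared form with the Euclidean product norm). -/
theorem stmt_5 {n m : ℕ}
    (f : EuclideanSpace ℝ (Fin n) → EReal) (g : EuclideanSpace ℝ (Fin m) → EReal)
    (hfproper : ∃ u, f u ≠ ⊤) (hfnbot : ∀ u, f u ≠ ⊥) (hflsc : LowerSemicontinuous f)
    (hfconv : ∀ a b : EuclideanSpace ℝ (Fin n), ∀ t : ℝ, 0 ≤ t → t ≤ 1 →
      f (t • a + (1 - t) • b) ≤ (t : EReal) * f a + ((1 - t : ℝ) : EReal) * f b)
    (hgproper : ∃ u, g u ≠ ⊤) (hgnbot : ∀ u, g u ≠ ⊥) (hglsc : LowerSemicontinuous g)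
    (hgconv : ∀ a b : EuclideanSpace ℝ (Fin m), ∀ t : ℝ, 0 ≤ t → t ≤ 1 →
      g (t • a + (1 - t) • b) ≤ (t : EReal) * g a + ((1 - t : ℝ) : EReal) * g b)
    (H : EuclideanSpace ℝ (Fin n) × EuclideanSpace ℝ (Fin m) → ℝ)
    (gx : EuclideanSpace ℝ (Fin n) × EuclideanSpace ℝ (Fin m) → EuclideanSpace ℝ (Fin n))
    (gy : EuclideanSpace ℝ (Fin n) × EuclideanSpace ℝ (Fin m) → EuclideanSpace ℝ (Fin m))
    (hgx : ∀ p, HasGradientAt (fun x' => H (x', p.2)) (gx p) p.1)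
    (hgy : ∀ p, HasGradientAt (fun y' => H (p.1, y')) (gy p) p.2)
    (L γ₁ γ₂ lam : ℝ) (hL : 0 < L) (hγ₁ : 0 < γ₁) (hγ₂ : 0 < γ₂)
    (hlam0 : 0 ≤ lam) (hlam1 : lam ≤ 1)
    (hLip : ∀ p q, ‖gx p - gx q‖ ^ 2 + ‖gy p - gy q‖ ^ 2
      ≤ L ^ 2 * (‖p.1 - q.1‖ ^ 2 + ‖p.2 - q.2‖ ^ 2))
    (proxf : EuclideanSpace ℝ (Fin n) → EuclideanSpace ℝ (Fin n))
    (proxg : EuclideanSpace ℝ (Fin m) → EuclideanSpace ℝ (Fin m))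
    (hproxf : ∀ w u, f (proxf w) + ((γ₁ * L / 2 * ‖proxf w - w‖ ^ 2 : ℝ) : EReal)
      ≤ f u + ((γ₁ * L / 2 * ‖u - w‖ ^ 2 : ℝ) : EReal))
    (hproxg : ∀ w u, g (proxg w) + ((γ₂ * L / 2 * ‖proxg w - w‖ ^ 2 : ℝ) : EReal)
      ≤ g u + ((γ₂ * L / 2 * ‖u - w‖ ^ 2 : ℝ) : EReal)) :
    ∀ (x x' : EuclideanSpace ℝ (Fin n)) (y y' : EuclideanSpace ℝ (Fin m))
      (u u' : EuclideanSpace ℝ (Fin n)) (v v' : EuclideanSpace ℝ (Fin m)),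
      u = proxf (x - (γ₁ * L)⁻¹ • gx (x, y)) - x →
      u' = proxf (x' - (γ₁ * L)⁻¹ • gx (x', y')) - x' →
      v = proxg (y - (γ₂ * L)⁻¹ • gy ((1 - lam) • (u + x) + lam • x, y)) - y →
      v' = proxg (y' - (γ₂ * L)⁻¹ • gy ((1 - lam) • (u' + x') + lam • x', y')) - y' →
      ‖u - u'‖ ^ 2 + ‖v - v'‖ ^ 2
        ≤ (6 + 4 / γ₁ ^ 2 + (4 + 24 * (1 - lam) ^ 2) / γ₂ ^ 2
            + 16 * (1 - lam) ^ 2 / (γ₁ ^ 2 * γ₂ ^ 2)) * (‖x - x'‖ ^ 2 + ‖y - y'‖ ^ 2) := by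
  intro x x' y y' u u' v v' hu hu' hv hv'
  have hγL1 : 0 < γ₁ * L := by positivity
  have hγL2 : 0 < γ₂ * L := by positivity
  have hne_f := prox_nonexpansive f hfproper hfnbot hfconv (γ₁ * L) hγL1 proxf hproxf
  have hne_g := prox_nonexpansive g hgproper hgnbot hgconv (γ₂ * L) hγL2 proxg hproxg
  set c1 : ℝ := (γ₁ * L)⁻¹ with hc1
  set c2 : ℝ := (γ₂ * L)⁻¹ with hc2
  have hc1pos : 0 < c1 := by rw [hc1]; positivity
  have hc2pos : 0 < c2 := by rw [hc2]; positivity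
  set w1 := x - c1 • gx (x, y) with hw1d
  set w1' := x' - c1 • gx (x', y') with hw1d'
  set z := (1 - lam) • (u + x) + lam • x with hzd
  set z' := (1 - lam) • (u' + x') + lam • x' with hzd'
  set w2 := y - c2 • gy (z, y) with hw2d
  set w2' := y' - c2 • gy (z', y') with hw2d'
  set a := ‖x - x'‖ with had
  set b := ‖y - y'‖ with hbd
  set G1 := ‖gx (x, y) - gx (x', y')‖ with hG1d
  set G2 := ‖gy (z, y) - gy (z', y')‖ with hG2d
  -- norm bounds
  have hw1diff : w1 - w1' = (x - x') - c1 • (gx (x, y) - gx (x', y')) := by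
    rw [hw1d, hw1d']; module
  have hw1n : ‖w1 - w1'‖ ≤ a + c1 * G1 := by
    rw [hw1diff]
    refine le_trans (norm_sub_le _ _) ?_
    rw [norm_smul, Real.norm_eq_abs, abs_of_pos hc1pos]
  have hP1 : ‖proxf w1 - proxf w1'‖ ≤ ‖w1 - w1'‖ := hne_f w1 w1'
  have hudiff : u - u' = (proxf w1 - proxf w1') - (x - x') := by
    rw [hu, hu']; module
  have hdu : ‖u - u'‖ ≤ 2 * a + c1 * G1 := by
    rw [hudiff]
    refine le_trans (norm_sub_le _ _) ?_
    have := le_trans hP1 hw1n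
    linarith
  have hux : u + x = proxf w1 := by rw [hu]; abel
  have hux' : u' + x' = proxf w1' := by rw [hu']; abel
  have hzdiff : z - z' = (1 - lam) • (proxf w1 - proxf w1') + lam • (x - x') := by
    rw [hzd, hzd', hux, hux']; module
  have hzn : ‖z - z'‖ ≤ a + (1 - lam) * (c1 * G1) := by
    rw [hzdiff]
    refine le_trans (norm_add_le _ _) ?_
    rw [norm_smul, norm_smul, Real.norm_eq_abs, Real.norm_eq_abs,
      abs_of_nonneg (by linarith : (0:ℝ) ≤ 1 - lam), abs_of_nonneg hlam0]
    have h1 : (1 - lam) * ‖proxf w1 - proxf w1'‖ ≤ (1 - lam) * (a + c1 * G1) :=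
      mul_le_mul_of_nonneg_left (le_trans hP1 hw1n) (by linarith)
    nlinarith [mul_nonneg hlam0 (norm_nonneg (x - x'))]
  have hw2diff : w2 - w2' = (y - y') - c2 • (gy (z, y) - gy (z', y')) := by
    rw [hw2d, hw2d']; module
  have hw2n : ‖w2 - w2'‖ ≤ b + c2 * G2 := by
    rw [hw2diff]
    refine le_trans (norm_sub_le _ _) ?_
    rw [norm_smul, Real.norm_eq_abs, abs_of_pos hc2pos]
  have hP2 : ‖proxg w2 - proxg w2'‖ ≤ ‖w2 - w2'‖ := hne_g w2 w2'
  have hvdiff : v - v' = (proxg w2 - proxg w2') - (y - y') := by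
    rw [hv, hv']; module
  have hdv : ‖v - v'‖ ≤ 2 * b + c2 * G2 := by
    rw [hvdiff]
    refine le_trans (norm_sub_le _ _) ?_
    have := le_trans hP2 hw2n
    linarith
  -- Lipschitz bounds
  have hG1sq : G1 ^ 2 ≤ L ^ 2 * (a ^ 2 + b ^ 2) := by
    have h := hLip (x, y) (x', y')
    simp only at h
    nlinarith [sq_nonneg ‖gy (x, y) - gy (x', y')‖]
  have hG2sq : G2 ^ 2 ≤ L ^ 2 * (‖z - z'‖ ^ 2 + b ^ 2) := by
    have h := hLip (z, y) (z', y')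
    simp only at h
    nlinarith [sq_nonneg ‖gx (z, y) - gx (z', y')‖]
  -- apply scalar lemma
  have key := scalar_bound a b (G1 / L) (G2 / L) ‖z - z'‖ ‖u - u'‖ ‖v - v'‖
    (1 - lam) (1 / γ₁) (1 / γ₂)
    (norm_nonneg _) (norm_nonneg _) (by positivity) (by positivity) (norm_nonneg _)
    (norm_nonneg _) (norm_nonneg _) (by linarith) (by linarith)
    (by positivity) (by positivity)
    (by rw [div_pow, div_le_iff₀ (by positivity : (0:ℝ) < L ^ 2)]; linarith)
    (by
      have : (1 - lam) * (1 / γ₁) * (G1 / L) = (1 - lam) * (c1 * G1) := by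
        rw [hc1]; field_simp
      rw [this]; exact hzn)
    (by rw [div_pow, div_le_iff₀ (by positivity : (0:ℝ) < L ^ 2)]; linarith)
    (by
      have : (1 / γ₁) * (G1 / L) = c1 * G1 := by rw [hc1]; field_simp
      rw [this]; exact hdu)
    (by
      have : (1 / γ₂) * (G2 / L) = c2 * G2 := by rw [hc2]; field_simp
      rw [this]; exact hdv)
  have hcoef : (6 + 4 / γ₁ ^ 2 + (4 + 24 * (1 - lam) ^ 2) / γ₂ ^ 2
      + 16 * (1 - lam) ^ 2 / (γ₁ ^ 2 * γ₂ ^ 2))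
      = (6 + 4 * (1 / γ₁) ^ 2 + (4 + 24 * (1 - lam) ^ 2) * (1 / γ₂) ^ 2
      + 16 * (1 - lam) ^ 2 * (1 / γ₁) ^ 2 * (1 / γ₂) ^ 2) := by
    field_simp
  rw [hcoef]
  exact key
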